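/- arXiv:1710.05488 — 2 statements merged into one kernel-verified Lean document; each statement's English description precedes it below -/
import Mathlib

section
/- Let h : ℝⁿ → ℝ be strictly convex and differentiable, let c(x,y) = h(x−y), and let φ be a Kantorovich potential with φ^c(y₀) = c(x₀,y₀) − φ(x₀) for some x₀ in the interior of the domain where φ is differentiable. Then ∇φ(x₀) = ∇h(x₀ − y₀), and hence y₀ = x₀ − (∇h)⁻¹(∇φ(x₀)). -/
open scoped RealInnerProductSpace

private lemma grad_strict_inj {n : ℕ} {h : EuclideanSpace ℝ (Fin n) → ℝ}
    (hconv : StrictConvexOn ℝ Set.univ h) (hdiff : Differentiable ℝ h)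
    {z w : EuclideanSpace ℝ (Fin n)} (he : gradient h z = gradient h w) : z = w := by
  by_contra hne
  set v := z - w with hv
  have hv0 : v ≠ 0 := sub_ne_zero.mpr hne
  set g : ℝ → ℝ := fun t => h (w + t • v) with hg
  have hgd : ∀ t : ℝ, HasDerivAt g ⟪gradient h (w + t • v), v⟫ t := by
    intro t
    have hc : HasDerivAt (fun t : ℝ => w + t • v) v t := by
      simpa using ((hasDerivAt_id t).smul_const v).const_add w
    have hf := (hdiff (w + t • v)).hasGradientAt.hasFDerivAt
    have := hf.comp_hasDerivAt t hc
    simp only [InnerProductSpace.toDual_apply_apply] at this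
    exact this
  have gsc : StrictConvexOn ℝ Set.univ g := by
    refine ⟨convex_univ, ?_⟩
    intro a _ b _ hab ta tb hta htb htab
    have hne' : w + a • v ≠ w + b • v := by
      intro hcontra
      apply hab
      have : a • v = b • v := by
        have := add_left_cancel hcontra
        exact this
      rcases smul_left_injective ℝ hv0 this with rfl
      rfl
    have := hconv.2 (Set.mem_univ (w + a • v)) (Set.mem_univ (w + b • v)) hne' hta htb htab
    have heq : ta • (w + a • v) + tb • (w + b • v) = w + (ta * a + tb * b) • v := by
      have htb' : tb = 1 - ta := by linarith
      subst htb'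
      module
    simp only [hg, smul_eq_mul]
    rw [← heq]
    exact this
  have h1 : ⟪gradient h (w + (0:ℝ) • v), v⟫ < slope g 0 1 :=
    gsc.lt_slope_of_hasDerivAt (Set.mem_univ 0) (Set.mem_univ 1) one_pos (hgd 0)
  have h2 : slope g 0 1 < ⟪gradient h (w + (1:ℝ) • v), v⟫ :=
    gsc.slope_lt_of_hasDerivAt (Set.mem_univ 0) (Set.mem_univ 1) one_pos (hgd 1)
  have hz : w + (1:ℝ) • v = z := by simp [hv]
  have hw : w + (0:ℝ) • v = w := by simp
  rw [hw] at h1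
  rw [hz] at h2
  rw [he] at h2
  exact absurd (h1.trans h2) (lt_irrefl _)

/-- For cost `c(x,y) = h(x-y)` with `h` strictly convex and differentiable, if the
infimum defining the c-transform `φ^c(y₀) = inf_x (c(x,y₀) - φ(x))` is attained at
`x₀`, where `φ` is differentiable, then `∇φ(x₀) = ∇h(x₀ - y₀)`; hence, `∇h` being
injective, `y₀ = x₀ - (∇h)⁻¹(∇φ(x₀))`. -/
theorem kantorovich_potential_gradient_relation
    (n : ℕ) (h φ : EuclideanSpace ℝ (Fin n) → ℝ)
    (hconv : StrictConvexOn ℝ Set.univ h)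
    (hdiff : Differentiable ℝ h)
    (x₀ y₀ : EuclideanSpace ℝ (Fin n))
    (hφdiff : DifferentiableAt ℝ φ x₀)
    (hmin : ∀ x : EuclideanSpace ℝ (Fin n),
      h (x₀ - y₀) - φ x₀ ≤ h (x - y₀) - φ x) :
    gradient φ x₀ = gradient h (x₀ - y₀) ∧
      ∀ z : EuclideanSpace ℝ (Fin n), gradient h z = gradient φ x₀ → y₀ = x₀ - z := by
  have hF1 : HasFDerivAt (fun x => h (x - y₀))
      (InnerProductSpace.toDual ℝ _ (gradient h (x₀ - y₀))) x₀ := by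
    have := (hdiff (x₀ - y₀)).hasGradientAt.hasFDerivAt
    have hc : HasFDerivAt (fun x : EuclideanSpace ℝ (Fin n) => x - y₀)
        (ContinuousLinearMap.id ℝ _) x₀ := (hasFDerivAt_id x₀).sub_const y₀
    have hcomp := this.comp x₀ hc
    rw [ContinuousLinearMap.comp_id] at hcomp
    exact hcomp
  have hF2 : HasFDerivAt φ (InnerProductSpace.toDual ℝ _ (gradient φ x₀)) x₀ :=
    hφdiff.hasGradientAt.hasFDerivAt
  have hFd : HasFDerivAt (fun x => h (x - y₀) - φ x)
      (InnerProductSpace.toDual ℝ _ (gradient h (x₀ - y₀)) -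
        InnerProductSpace.toDual ℝ _ (gradient φ x₀)) x₀ := hF1.sub hF2
  have hloc : IsLocalMin (fun x => h (x - y₀) - φ x) x₀ :=
    Filter.Eventually.of_forall hmin
  have hzero := hloc.hasFDerivAt_eq_zero hFd
  have heq : InnerProductSpace.toDual ℝ _ (gradient h (x₀ - y₀)) =
      InnerProductSpace.toDual ℝ _ (gradient φ x₀) := sub_eq_zero.mp hzero
  have hgrad : gradient φ x₀ = gradient h (x₀ - y₀) :=
    ((InnerProductSpace.toDual ℝ _).injective heq).symm
  refine ⟨hgrad, fun z hz => ?_⟩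
  have : z = x₀ - y₀ := grad_strict_inj hconv hdiff (hz.trans hgrad)
  rw [this]
  abel
end

section
/- Suppose the volume functions w_i(h) = μ(W_i(h) ∩ Ω) are C¹ on the open set H = {h : w_i(h) > 0 ∀i}. Then the mixed partials satisfy the symmetry ∂w_i/∂h_j = ∂w_j/∂h_i for i ≠ j, so the 1-form ∑_i w_i dh_i is closed on H and admits a potential A(h) with ∂A/∂h_i = w_i(h). -/
open scoped RealInnerProductSpace ENNReal
open MeasureTheory Filter Asymptotics Set Topology

namespace CMProof

variable {n k : ℕ}

lemma coord_le_norm (t : EuclideanSpace ℝ (Fin k)) (i : Fin k) : |t i| ≤ ‖t‖ := by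
  rw [EuclideanSpace.norm_eq]
  have h1 : |t i| = Real.sqrt (‖t i‖ ^ 2) := by
    rw [Real.sqrt_sq_eq_abs]; simp [abs_abs]
  rw [h1]
  apply Real.sqrt_le_sqrt
  exact Finset.single_le_sum (f := fun j => ‖t j‖ ^ 2) (fun j _ => by positivity) (Finset.mem_univ i)

lemma hyperplane_null (μ : Measure (EuclideanSpace ℝ (Fin n))) (hac : μ ≪ volume)
    (v : EuclideanSpace ℝ (Fin n)) (hv : v ≠ 0) (c : ℝ) :
    μ {x : EuclideanSpace ℝ (Fin n) | ⟪x, v⟫ = c} = 0 := by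
  apply hac
  have hvn : ‖v‖ ≠ 0 := norm_ne_zero_iff.mpr hv
  set φ : EuclideanSpace ℝ (Fin n) →L[ℝ] ℝ := innerSL ℝ v with hφ
  set x₀ : EuclideanSpace ℝ (Fin n) := (c / ‖v‖ ^ 2) • v with hx₀
  have hφx₀ : φ x₀ = c := by
    simp only [hφ, hx₀, innerSL_apply_apply, inner_smul_right, real_inner_self_eq_norm_sq]
    field_simp
  have hset : {x : EuclideanSpace ℝ (Fin n) | ⟪x, v⟫ = c}
      = (fun x => x + (-x₀)) ⁻¹' (LinearMap.ker (φ : EuclideanSpace ℝ (Fin n) →ₗ[ℝ] ℝ) : Set (EuclideanSpace ℝ (Fin n))) := by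
    ext x
    simp only [Set.mem_setOf_eq, Set.mem_preimage, SetLike.mem_coe, LinearMap.mem_ker]
    have h2 : (φ : EuclideanSpace ℝ (Fin n) →ₗ[ℝ] ℝ) (x + -x₀) = ⟪v, x⟫ - c := by
      have := map_add (φ : EuclideanSpace ℝ (Fin n) →ₗ[ℝ] ℝ) x (-x₀)
      rw [this, map_neg]
      have h3 : (φ : EuclideanSpace ℝ (Fin n) →ₗ[ℝ] ℝ) x₀ = c := hφx₀
      rw [h3]
      simp [hφ, innerSL_apply_apply]
      ring
    rw [h2, real_inner_comm]
    constructor <;> intro h <;> linarith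
  rw [hset, measure_preimage_add_right]
  apply Measure.addHaar_submodule
  intro htop
  have hmem : v ∈ LinearMap.ker (φ : EuclideanSpace ℝ (Fin n) →ₗ[ℝ] ℝ) := htop ▸ Submodule.mem_top
  rw [LinearMap.mem_ker] at hmem
  have : (φ : EuclideanSpace ℝ (Fin n) →ₗ[ℝ] ℝ) v = ‖v‖ ^ 2 := by
    show (φ v : ℝ) = _
    simp only [hφ, innerSL_apply_apply, real_inner_self_eq_norm_sq]
  rw [hmem] at this
  exact hvn (by nlinarith [norm_nonneg v])

lemma tset_null (μ : Measure (EuclideanSpace ℝ (Fin n))) (hac : μ ≪ volume)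
    (y : Fin k → EuclideanSpace ℝ (Fin n)) (hy : Function.Injective y)
    (h : Fin k → ℝ) :
    μ (⋃ i, ⋃ j, ⋃ (_ : i ≠ j), {x : EuclideanSpace ℝ (Fin n) |
      ⟪x, y i⟫ + h i = ⟪x, y j⟫ + h j}) = 0 := by
  refine measure_iUnion_null fun i => measure_iUnion_null fun j => measure_iUnion_null fun hij => ?_
  have hv : y i - y j ≠ 0 := sub_ne_zero.mpr (fun e => hij (hy e))
  have hset : {x : EuclideanSpace ℝ (Fin n) | ⟪x, y i⟫ + h i = ⟪x, y j⟫ + h j}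
      = {x : EuclideanSpace ℝ (Fin n) | ⟪x, y i - y j⟫ = h j - h i} := by
    ext x
    simp only [Set.mem_setOf_eq, inner_sub_right]
    constructor <;> intro hx <;> linarith
  rw [hset]
  exact hyperplane_null μ hac _ hv _

noncomputable def umax (hk : 0 < k) (y : Fin k → EuclideanSpace ℝ (Fin n))
    (h : EuclideanSpace ℝ (Fin k)) (x : EuclideanSpace ℝ (Fin n)) : ℝ :=
  Finset.univ.sup' (Finset.univ_nonempty_iff.mpr (Fin.pos_iff_nonempty.mp hk))
    (fun i => ⟪x, y i⟫ + h i)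

def cell (y : Fin k → EuclideanSpace ℝ (Fin n)) (h : EuclideanSpace ℝ (Fin k))
    (i : Fin k) : Set (EuclideanSpace ℝ (Fin n)) :=
  {x | ∀ j, ⟪x, y j⟫ + h j ≤ ⟪x, y i⟫ + h i}

variable (hk : 0 < k) (y : Fin k → EuclideanSpace ℝ (Fin n))
  (h : EuclideanSpace ℝ (Fin k)) (x : EuclideanSpace ℝ (Fin n))

lemma le_umax (i : Fin k) : ⟪x, y i⟫ + h i ≤ umax hk y h x := by
  unfold umax
  exact Finset.le_sup' (fun i => ⟪x, y i⟫ + h i) (Finset.mem_univ i)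

lemma exists_umax : ∃ i, umax hk y h x = ⟪x, y i⟫ + h i := by
  obtain ⟨i, -, hi⟩ := Finset.exists_mem_eq_sup'
    (Finset.univ_nonempty_iff.mpr (Fin.pos_iff_nonempty.mp hk))
    (fun i => ⟪x, y i⟫ + h i)
  exact ⟨i, hi⟩

lemma umax_le {c : ℝ} (H : ∀ i, ⟪x, y i⟫ + h i ≤ c) : umax hk y h x ≤ c := by
  unfold umax
  exact Finset.sup'_le _ _ fun i _ => H i

lemma fcont (i : Fin k) : Continuous fun x : EuclideanSpace ℝ (Fin n) => ⟪x, y i⟫ + h i :=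
  (continuous_id.inner continuous_const).add continuous_const

lemma umax_continuous : Continuous (umax hk y h) := by
  rw [continuous_iff_continuousAt]
  intro x
  exact ContinuousAt.finset_sup'_apply _ fun i _ => (fcont y h i).continuousAt

lemma umax_lip (a b : EuclideanSpace ℝ (Fin k)) :
    umax hk y a x - umax hk y b x ≤ ‖a - b‖ := by
  obtain ⟨i, hi⟩ := exists_umax hk y a x
  have h1 : ⟪x, y i⟫ + b i ≤ umax hk y b x := le_umax hk y b x i
  have h2 : a i - b i ≤ ‖a - b‖ := by
    have h3 := (abs_le.mp (coord_le_norm (a - b) i)).2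
    have h4 : (a - b) i = a i - b i := rfl
    linarith [h4 ▸ h3]
  linarith

lemma cell_measurable (i : Fin k) : MeasurableSet (cell y h i) := by
  have : cell y h i = ⋂ j, {x | ⟪x, y j⟫ + h j ≤ ⟪x, y i⟫ + h i} := by
    ext x; simp [cell, Set.mem_iInter]
  rw [this]
  exact (isClosed_iInter fun j => isClosed_le (fcont y h j) (fcont y h i)).measurableSet

variable (y : Fin k → EuclideanSpace ℝ (Fin n)) (Ω : Set (EuclideanSpace ℝ (Fin n)))
  (μ : Measure (EuclideanSpace ℝ (Fin n))) [IsProbabilityMeasure μ]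

lemma w_repr (h : EuclideanSpace ℝ (Fin k)) (i : Fin k) :
    (μ (cell y h i ∩ Ω)).toReal
      = ∫ x in Ω, (cell y h i).indicator (fun _ => (1:ℝ)) x ∂μ := by
  rw [integral_indicator (cell_measurable y h i), setIntegral_const, Measure.real,
    Measure.restrict_apply (cell_measurable y h i), smul_eq_mul, mul_one]

lemma w_cont (hac : μ ≪ volume)
    (hy : Function.Injective y) (i : Fin k) :
    Continuous fun h : EuclideanSpace ℝ (Fin k) => (μ (cell y h i ∩ Ω)).toReal := by
  rw [continuous_iff_continuousAt]
  intro h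
  unfold ContinuousAt
  have hrw : ∀ h', (μ (cell y h' i ∩ Ω)).toReal
      = ∫ x in Ω, (cell y h' i).indicator (fun _ => (1:ℝ)) x ∂μ := fun h' => w_repr y Ω μ h' i
  simp only [hrw]
  apply tendsto_integral_filter_of_dominated_convergence (fun _ => (1:ℝ))
  · exact Eventually.of_forall fun h' =>
      (stronglyMeasurable_const.indicator (cell_measurable y h' i)).aestronglyMeasurable
  · refine Eventually.of_forall fun h' => Eventually.of_forall fun x => ?_
    classical
    rw [Set.indicator_apply]
    split_ifs <;> simp
  · exact integrable_const 1
  · -- a.e. pointwise convergence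
    have hT := tset_null μ hac y hy h
    refine ae_restrict_of_ae ?_
    have hae : ∀ᵐ x ∂μ, x ∉ (⋃ i, ⋃ j, ⋃ (_ : i ≠ j), {x : EuclideanSpace ℝ (Fin n) |
        ⟪x, y i⟫ + h i = ⟪x, y j⟫ + h j}) := measure_eq_zero_iff_ae_notMem.mp hT
    filter_upwards [hae] with x hx
    simp only [Set.mem_iUnion, not_exists, Set.mem_setOf_eq] at hx
    by_cases hxc : x ∈ cell y h i
    · have hev2 : ∀ j, ∀ᶠ h' in 𝓝 h, j ≠ i → ⟪x, y j⟫ + h' j < ⟪x, y i⟫ + h' i := by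
        intro j
        by_cases hj : j = i
        · exact Eventually.of_forall (fun h' hji => absurd hj hji)
        · have hcont : Continuous fun h' : EuclideanSpace ℝ (Fin k) =>
              (⟪x, y i⟫ + h' i) - (⟪x, y j⟫ + h' j) :=
            ((continuous_const.add (EuclideanSpace.proj i).continuous).sub
              (continuous_const.add (EuclideanSpace.proj j).continuous))
          have hpos : 0 < (⟪x, y i⟫ + h i) - (⟪x, y j⟫ + h j) := by
            have h5 : ⟪x, y j⟫ + h j < ⟪x, y i⟫ + h i :=
              lt_of_le_of_ne (hxc j) (fun e => hx j i hj e)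
            linarith
          have := hcont.continuousAt (x := h) |>.eventually (eventually_gt_nhds hpos)
          filter_upwards [this] with h' hh' _
          linarith
      have hev : ∀ᶠ h' in 𝓝 h, x ∈ cell y h' i := by
        filter_upwards [eventually_all.mpr hev2] with h' hh'
        intro j
        by_cases hj : j = i
        · subst hj; exact le_refl _
        · exact (hh' j hj).le
      have h1 : (cell y h i).indicator (fun _ => (1:ℝ)) x = 1 := Set.indicator_of_mem hxc _
      rw [h1]
      refine Tendsto.congr' ?_ tendsto_const_nhds
      filter_upwards [hev] with h' hh'
      exact (Set.indicator_of_mem hh' (fun _ => (1:ℝ))).symm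
    · have hxc' := hxc
      simp only [cell, Set.mem_setOf_eq, not_forall, not_le] at hxc'
      obtain ⟨j, hj⟩ := hxc'
      have hji : j ≠ i := fun e => by rw [e] at hj; exact lt_irrefl _ hj
      have hcont : Continuous fun h' : EuclideanSpace ℝ (Fin k) =>
          (⟪x, y j⟫ + h' j) - (⟪x, y i⟫ + h' i) :=
        ((continuous_const.add (EuclideanSpace.proj j).continuous).sub
          (continuous_const.add (EuclideanSpace.proj i).continuous))
      have hpos : 0 < (⟪x, y j⟫ + h j) - (⟪x, y i⟫ + h i) := by linarith
      have hev : ∀ᶠ h' in 𝓝 h, x ∉ cell y h' i := by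
        have := hcont.continuousAt (x := h) |>.eventually (eventually_gt_nhds hpos)
        filter_upwards [this] with h' hh' hmem
        have := hmem j
        linarith
      have h1 : (cell y h i).indicator (fun _ => (1:ℝ)) x = 0 := Set.indicator_of_notMem hxc _
      rw [h1]
      refine Tendsto.congr' ?_ tendsto_const_nhds
      filter_upwards [hev] with h' hh'
      exact (Set.indicator_of_notMem hh' (fun _ => (1:ℝ))).symm

theorem gradient_aux (hk : 0 < k) (y : Fin k → EuclideanSpace ℝ (Fin n))
    (hy : Function.Injective y)
    (Ω : Set (EuclideanSpace ℝ (Fin n))) (hΩc : IsCompact Ω)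
    (μ : Measure (EuclideanSpace ℝ (Fin n))) [IsProbabilityMeasure μ] (hac : μ ≪ volume)
    (h : EuclideanSpace ℝ (Fin k)) :
    HasFDerivAt (fun h' => ∫ x in Ω, umax hk y h' x ∂μ)
      ((InnerProductSpace.toDual ℝ (EuclideanSpace ℝ (Fin k)))
        (WithLp.toLp 2 (fun i => (μ (cell y h i ∩ Ω)).toReal) : EuclideanSpace ℝ (Fin k))) h := by
  classical
  haveI : Nonempty (Fin k) := Fin.pos_iff_nonempty.mp hk
  set wv : EuclideanSpace ℝ (Fin k) := WithLp.toLp 2 (fun i => (μ (cell y h i ∩ Ω)).toReal) with hwv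
  have hΩm : MeasurableSet Ω := hΩc.isClosed.measurableSet
  have hInt : ∀ h', IntegrableOn (fun x => umax hk y h' x) Ω μ := fun h' =>
    ((umax_continuous hk y h').continuousOn).integrableOn_compact hΩc
  have hIndInt : ∀ (h' : EuclideanSpace ℝ (Fin k)) (i : Fin k),
      Integrable (fun x => (cell y h' i).indicator (fun _ => (1:ℝ)) x) (μ.restrict Ω) :=
    fun h' i => (integrable_const (1:ℝ)).indicator (cell_measurable y h' i)
  -- inner product expansion
  have hinner : ∀ t : EuclideanSpace ℝ (Fin k), ⟪wv, t⟫ =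
      ∫ x in Ω, (∑ i, t i * (cell y h i).indicator (fun _ => (1:ℝ)) x) ∂μ := by
    intro t
    rw [integral_finset_sum _ (fun i _ => (hIndInt h i).const_mul _)]
    have hterm : ∀ i : Fin k, ∫ x in Ω, t i * (cell y h i).indicator (fun _ => (1:ℝ)) x ∂μ
        = wv i * t i := by
      intro i
      rw [integral_const_mul, ← w_repr y Ω μ h i]
      exact mul_comm _ _
    rw [Finset.sum_congr rfl (fun i _ => hterm i), PiLp.inner_apply]
    simp [RCLike.inner_apply, mul_comm]
  -- the gap sets
  set G : ℝ → Set (EuclideanSpace ℝ (Fin n)) := fun c =>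
    {x | ∃ i, ∀ j, j ≠ i → (⟪x, y j⟫ + h j) + c < ⟪x, y i⟫ + h i} with hG
  have hGopen : ∀ c, IsOpen (G c) := by
    intro c
    have hGeq : G c = ⋃ i, ⋂ j, {x : EuclideanSpace ℝ (Fin n) |
        j ≠ i → (⟪x, y j⟫ + h j) + c < ⟪x, y i⟫ + h i} := by
      ext x; simp [hG, Set.mem_iUnion, Set.mem_iInter]
    rw [hGeq]
    refine isOpen_iUnion fun i => isOpen_iInter_of_finite fun j => ?_
    by_cases hj : j = i
    · subst hj
      have : {x : EuclideanSpace ℝ (Fin n) |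
          j ≠ j → (⟪x, y j⟫ + h j) + c < ⟪x, y j⟫ + h j} = Set.univ := by
        ext x; simp
      rw [this]; exact isOpen_univ
    · have : {x : EuclideanSpace ℝ (Fin n) |
          j ≠ i → (⟪x, y j⟫ + h j) + c < ⟪x, y i⟫ + h i}
          = {x : EuclideanSpace ℝ (Fin n) | (⟪x, y j⟫ + h j) + c < ⟪x, y i⟫ + h i} := by
        ext x; simp [hj]
      rw [this]
      exact isOpen_lt ((fcont y h j).add continuous_const) (fcont y h i)
  have hGanti : ∀ {c c' : ℝ}, c ≤ c' → G c' ⊆ G c := by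
    intro c c' hcc x hx
    obtain ⟨i, hi⟩ := hx
    exact ⟨i, fun j hj => by have := hi j hj; linarith⟩
  -- decreasing exceptional sets
  set s : ℕ → Set (EuclideanSpace ℝ (Fin n)) := fun m => Ω \ G (1/((m:ℝ)+1)) with hs
  have hanti : Antitone s := by
    intro a b hab
    apply Set.diff_subset_diff_right
    apply hGanti
    have h1 : (a:ℝ)+1 ≤ (b:ℝ)+1 := by exact_mod_cast Nat.succ_le_succ hab
    exact one_div_le_one_div_of_le (by positivity) h1
  have hiInterT : (⋂ m, s m) ⊆ ⋃ i, ⋃ j, ⋃ (_ : i ≠ j), {x : EuclideanSpace ℝ (Fin n) |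
      ⟪x, y i⟫ + h i = ⟪x, y j⟫ + h j} := by
    intro x hx
    by_contra hxT
    simp only [Set.mem_iUnion, not_exists, Set.mem_setOf_eq] at hxT
    simp only [Set.mem_iInter] at hx
    obtain ⟨i, -, hi⟩ := Finset.exists_max_image Finset.univ
      (fun j => ⟪x, y j⟫ + h j) Finset.univ_nonempty
    by_cases hsing : (Finset.univ.erase i).Nonempty
    · obtain ⟨j₀, hj₀mem, hj₀⟩ := Finset.exists_max_image _ (fun j => ⟪x, y j⟫ + h j) hsing
      have hj₀i : j₀ ≠ i := Finset.ne_of_mem_erase hj₀mem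
      have hγ : 0 < (⟪x, y i⟫ + h i) - (⟪x, y j₀⟫ + h j₀) := by
        have h1 := hi j₀ (Finset.mem_univ j₀)
        have h2 : ⟪x, y j₀⟫ + h j₀ ≠ ⟪x, y i⟫ + h i := hxT j₀ i hj₀i
        cases lt_or_eq_of_le h1 with
        | inl hlt => linarith
        | inr heq => exact absurd heq h2
      obtain ⟨m, hm⟩ := exists_nat_one_div_lt hγ
      refine (hx m).2 ⟨i, fun j hj => ?_⟩
      have h6 := hj₀ j (Finset.mem_erase.mpr ⟨hj, Finset.mem_univ j⟩)
      linarith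
    · refine (hx 0).2 ⟨i, fun j hj => ?_⟩
      exact absurd ⟨j, Finset.mem_erase.mpr ⟨hj, Finset.mem_univ j⟩⟩ hsing
  have hlim : Tendsto (fun m => μ (s m)) atTop (𝓝 0) := by
    have h0 : μ (⋂ m, s m) = 0 :=
      measure_mono_null hiInterT (tset_null μ hac y hy h)
    have := tendsto_measure_iInter_atTop (μ := μ)
      (fun m => ((hΩm.diff (hGopen _).measurableSet)).nullMeasurableSet) hanti
      ⟨0, measure_ne_top μ _⟩
    rw [h0] at this
    exact this
  -- main estimate
  rw [hasFDerivAt_iff_isLittleO_nhds_zero]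
  rw [isLittleO_iff]
  intro ε hε
  have hofpos : (0:ℝ≥0∞) < ENNReal.ofReal (ε/(k+1)) :=
    ENNReal.ofReal_pos.mpr (by positivity)
  obtain ⟨m₀, hm₀⟩ := (hlim.eventually (gt_mem_nhds hofpos)).exists
  have hδpos : (0:ℝ) < 1/(2*((m₀:ℝ)+1)) := by positivity
  filter_upwards [Metric.ball_mem_nhds (0 : EuclideanSpace ℝ (Fin k)) hδpos] with t ht
  rw [mem_ball_zero_iff] at ht
  rcases eq_or_ne t 0 with rfl | htne
  · simp
  · have htn : (0:ℝ) < ‖t‖ := norm_pos_iff.mpr htne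
    have hsub : 2*‖t‖ ≤ 1/((m₀:ℝ)+1) := by
      have h1 : 2*‖t‖ < 2*(1/(2*((m₀:ℝ)+1))) := by linarith
      have h2 : 2*(1/(2*((m₀:ℝ)+1))) = 1/((m₀:ℝ)+1) := by
        field_simp
      linarith
    have hGsub : G (1/((m₀:ℝ)+1)) ⊆ G (2*‖t‖) := hGanti hsub
    have hmeas_lt : μ (Ω \ G (2*‖t‖)) < ENNReal.ofReal (ε/(k+1)) :=
      lt_of_le_of_lt (measure_mono (Set.diff_subset_diff_right hGsub)) hm₀
    set g : EuclideanSpace ℝ (Fin n) → ℝ := fun x =>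
      umax hk y (h+t) x - umax hk y h x
        - ∑ i, t i * (cell y h i).indicator (fun _ => (1:ℝ)) x with hgdef
    have hsumInt : Integrable
        (fun x => ∑ i, t i * (cell y h i).indicator (fun _ => (1:ℝ)) x) (μ.restrict Ω) :=
      integrable_finset_sum _ (fun i _ => (hIndInt h i).const_mul _)
    have hdiffInt : IntegrableOn (fun x => umax hk y (h+t) x - umax hk y h x) Ω μ :=
      (hInt (h+t)).sub (hInt h)
    have hgInt : IntegrableOn g Ω μ := hdiffInt.sub hsumInt
    have hkey : (∫ x in Ω, umax hk y (h+t) x ∂μ) - (∫ x in Ω, umax hk y h x ∂μ)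
        - (InnerProductSpace.toDual ℝ (EuclideanSpace ℝ (Fin k))) wv t = ∫ x in Ω, g x ∂μ := by
      rw [InnerProductSpace.toDual_apply_apply, hinner t,
        ← integral_sub (hInt (h+t)) (hInt h),
        ← integral_sub hdiffInt hsumInt]
    have claim0 : ∀ x ∈ Ω ∩ G (2*‖t‖), g x = 0 := by
      rintro x ⟨-, i, hi⟩
      have hti : ∀ j, |t j| ≤ ‖t‖ := coord_le_norm t
      have haddap : ∀ j : Fin k, (h + t) j = h j + t j := fun j => rfl
      have h1 : umax hk y (h+t) x = ⟪x, y i⟫ + h i + t i := by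
        apply le_antisymm
        · apply umax_le
          intro j
          rw [haddap j]
          by_cases hj : j = i
          · subst hj; linarith
          · have h2 := hi j hj
            have h3 := (abs_le.mp (hti j)).2
            have h4 := (abs_le.mp (hti i)).1
            linarith
        · have h5 := le_umax hk y (h+t) x i
          rw [haddap i] at h5
          linarith
      have h2 : umax hk y h x = ⟪x, y i⟫ + h i := by
        apply le_antisymm
        · apply umax_le
          intro j
          by_cases hj : j = i
          · subst hj; linarith
          · have := hi j hj; linarith
        · exact le_umax hk y h x i
      have hxi : x ∈ cell y h i := by
        intro j
        by_cases hj : j = i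
        · subst hj; exact le_refl _
        · have := hi j hj; linarith
      have hsum : ∑ j, t j * (cell y h j).indicator (fun _ => (1:ℝ)) x = t i := by
        rw [Finset.sum_eq_single i]
        · rw [Set.indicator_of_mem hxi (fun _ => (1:ℝ))]; ring
        · intro j _ hj
          have hxj : x ∉ cell y h j := by
            intro hmem
            have h5 := hmem i
            have h6 := hi j hj
            linarith
          rw [Set.indicator_of_notMem hxj (fun _ => (1:ℝ))]; ring
        · intro hni; exact absurd (Finset.mem_univ i) hni
      simp only [hgdef]
      rw [h1, h2, hsum]; ring
    have claim1 : ∀ x, ‖g x‖ ≤ ((k:ℝ)+1) * ‖t‖ := by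
      intro x
      have hl1 : umax hk y (h+t) x - umax hk y h x ≤ ‖t‖ := by
        have := umax_lip hk y x (h+t) h
        simpa [add_sub_cancel_left] using this
      have hl2 : umax hk y h x - umax hk y (h+t) x ≤ ‖t‖ := by
        have h5 := umax_lip hk y x h (h+t)
        have hnorm : ‖h - (h+t)‖ = ‖t‖ := by
          have : h - (h+t) = -t := by abel
          rw [this, norm_neg]
        rwa [hnorm] at h5
      have hl3 : |∑ j, t j * (cell y h j).indicator (fun _ => (1:ℝ)) x| ≤ (k:ℝ) * ‖t‖ := by
        calc |∑ j, t j * (cell y h j).indicator (fun _ => (1:ℝ)) x|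
            ≤ ∑ j, |t j * (cell y h j).indicator (fun _ => (1:ℝ)) x| :=
              Finset.abs_sum_le_sum_abs _ _
          _ ≤ ∑ _j : Fin k, ‖t‖ := by
              apply Finset.sum_le_sum
              intro j _
              rw [abs_mul]
              have hind : |(cell y h j).indicator (fun _ => (1:ℝ)) x| ≤ 1 := by
                rw [Set.indicator_apply]; split_ifs <;> simp
              calc |t j| * |(cell y h j).indicator (fun _ => (1:ℝ)) x|
                  ≤ ‖t‖ * 1 := mul_le_mul (coord_le_norm t j) hind (abs_nonneg _) (norm_nonneg t)
                _ = ‖t‖ := mul_one _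
          _ = (k:ℝ) * ‖t‖ := by
              simp [Finset.sum_const, Finset.card_univ, nsmul_eq_mul]
      have hA : |umax hk y (h+t) x - umax hk y h x| ≤ ‖t‖ := abs_le.mpr ⟨by linarith, hl1⟩
      have h7 := abs_le.mp hA
      have h8 := abs_le.mp hl3
      rw [Real.norm_eq_abs]
      simp only [hgdef]
      apply abs_le.mpr
      constructor
      · linarith [h7.1, h8.2]
      · linarith [h7.2, h8.1]
    have hGm : MeasurableSet (G (2*‖t‖)) := (hGopen _).measurableSet
    have hsplit := integral_inter_add_diff (μ := μ) (s := Ω) (t := G (2*‖t‖)) hGm hgInt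
    have hzero : ∫ x in Ω ∩ G (2*‖t‖), g x ∂μ = 0 := by
      rw [setIntegral_congr_fun (hΩm.inter hGm) (fun x hx => claim0 x hx)]
      simp
    have hnorm_le : ‖∫ x in Ω, g x ∂μ‖ ≤ (((k:ℝ)+1) * ‖t‖) * (μ (Ω \ G (2*‖t‖))).toReal := by
      rw [← hsplit, hzero, zero_add]
      exact norm_setIntegral_le_of_norm_le_const (measure_lt_top μ _)
        (fun x _ => claim1 x)
    have htoReal : (μ (Ω \ G (2*‖t‖))).toReal ≤ ε/((k:ℝ)+1) := by
      calc (μ (Ω \ G (2*‖t‖))).toReal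
          ≤ (ENNReal.ofReal (ε/(k+1))).toReal :=
            ENNReal.toReal_mono ENNReal.ofReal_ne_top (le_of_lt hmeas_lt)
        _ = ε/((k:ℝ)+1) := ENNReal.toReal_ofReal (by positivity)
    have hfinal : ‖∫ x in Ω, g x ∂μ‖ ≤ ε * ‖t‖ := by
      have hk1 : (0:ℝ) < (k:ℝ)+1 := by positivity
      have h9 : (((k:ℝ)+1) * ‖t‖) * (μ (Ω \ G (2*‖t‖))).toReal
          ≤ (((k:ℝ)+1) * ‖t‖) * (ε/((k:ℝ)+1)) := by
        apply mul_le_mul_of_nonneg_left htoReal (by positivity)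
      have h10 : (((k:ℝ)+1) * ‖t‖) * (ε/((k:ℝ)+1)) = ε * ‖t‖ := by
        field_simp
      linarith
    rw [hkey]
    exact hfinal

end CMProof

open CMProof in
/-- If the cell measures `w_i(h) = μ(W_i(h) ∩ Ω)` are `C¹` on the open set
`H = {h : w_i(h) > 0 ∀i}`, then the mixed partials are symmetric,
`∂w_i/∂h_j = ∂w_j/∂h_i`, so the 1-form `∑ w_i dh_i` is closed on `H` and admits
a potential `A` with `∇A(h) = w(h)`. -/
theorem cell_measure_mixed_partials_symmetric
    (n k : ℕ) (hk : 0 < k)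
    (y : Fin k → EuclideanSpace ℝ (Fin n)) (hy : Function.Injective y)
    (Ω : Set (EuclideanSpace ℝ (Fin n))) (hΩc : IsCompact Ω) (hΩconv : Convex ℝ Ω)
    (μ : Measure (EuclideanSpace ℝ (Fin n))) [IsProbabilityMeasure μ]
    (hac : μ ≪ volume)
    (w : Fin k → EuclideanSpace ℝ (Fin k) → ℝ)
    (hw : ∀ (i : Fin k) (h : EuclideanSpace ℝ (Fin k)),
      w i h = (μ ({x : EuclideanSpace ℝ (Fin n) |
        ∀ j : Fin k, ⟪x, y j⟫ + h j ≤ ⟪x, y i⟫ + h i} ∩ Ω)).toReal)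
    (H : Set (EuclideanSpace ℝ (Fin k)))
    (hH : H = {h : EuclideanSpace ℝ (Fin k) | ∀ i : Fin k, 0 < w i h})
    (hC1 : ∀ i : Fin k, ContDiffOn ℝ 1 (w i) H) :
    (∀ h ∈ H, ∀ i j : Fin k, i ≠ j →
        fderiv ℝ (w i) h (EuclideanSpace.single j (1 : ℝ)) =
          fderiv ℝ (w j) h (EuclideanSpace.single i (1 : ℝ))) ∧
      ∃ A : EuclideanSpace ℝ (Fin k) → ℝ, ∀ h ∈ H,
        HasGradientAt A (WithLp.toLp 2 (fun i => w i h) : EuclideanSpace ℝ (Fin k)) h := by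
  classical
  set A : EuclideanSpace ℝ (Fin k) → ℝ := fun h' => ∫ x in Ω, umax hk y h' x ∂μ with hA
  have hweq : ∀ (i : Fin k) (h' : EuclideanSpace ℝ (Fin k)),
      w i h' = (μ (cell y h' i ∩ Ω)).toReal := fun i h' => hw i h'
  have hwvec : ∀ h' : EuclideanSpace ℝ (Fin k),
      (WithLp.toLp 2 (fun i => w i h') : EuclideanSpace ℝ (Fin k))
        = (WithLp.toLp 2 (fun i => (μ (cell y h' i ∩ Ω)).toReal) : EuclideanSpace ℝ (Fin k)) := by
    intro h'; congr 1; funext i; exact hweq i h'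
  have hgradAll : ∀ h' : EuclideanSpace ℝ (Fin k),
      HasGradientAt A (WithLp.toLp 2 (fun i => w i h') : EuclideanSpace ℝ (Fin k)) h' := by
    intro h'
    rw [hasGradientAt_iff_hasFDerivAt, hwvec h']
    exact gradient_aux hk y hy Ω hΩc μ hac h'
  have hHopen : IsOpen H := by
    rw [hH]
    have hset : {h : EuclideanSpace ℝ (Fin k) | ∀ i : Fin k, 0 < w i h}
        = ⋂ i : Fin k, {h : EuclideanSpace ℝ (Fin k) | 0 < w i h} := by
      ext h'; simp [Set.mem_iInter]
    rw [hset]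
    refine isOpen_iInter_of_finite fun i => ?_
    have hcont : Continuous (w i) := by
      have := w_cont y Ω μ hac hy i
      have heq : w i = fun h' => (μ (cell y h' i ∩ Ω)).toReal := funext fun h' => hweq i h'
      rw [heq]; exact this
    exact isOpen_lt continuous_const hcont
  constructor
  · intro h hmemH i j hij
    have hmem' : H ∈ 𝓝 h := hHopen.mem_nhds hmemH
    -- differentiability of the vector of cell measures
    have hdiff_wi : ∀ i : Fin k, DifferentiableAt ℝ (w i) h := fun i =>
      ((hC1 i).differentiableOn one_ne_zero).differentiableAt hmem'
    set f' : EuclideanSpace ℝ (Fin k) → (EuclideanSpace ℝ (Fin k) →L[ℝ] ℝ) := fun h' =>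
      (InnerProductSpace.toDual ℝ (EuclideanSpace ℝ (Fin k)))
        (WithLp.toLp 2 (fun i => w i h') : EuclideanSpace ℝ (Fin k)) with hf'
    have hf'At : ∀ h', HasFDerivAt A (f' h') h' := fun h' =>
      (hgradAll h').hasFDerivAt
    have hf'eq : f' = fun h' => ∑ i : Fin k, w i h' •
        ((InnerProductSpace.toDual ℝ (EuclideanSpace ℝ (Fin k)))
          (EuclideanSpace.single i (1:ℝ))) := by
      funext h'
      refine ContinuousLinearMap.ext fun t => ?_
      rw [hf']
      simp only [InnerProductSpace.toDual_apply_apply, ContinuousLinearMap.sum_apply,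
        ContinuousLinearMap.smul_apply, EuclideanSpace.inner_single_left, map_one, one_mul,
        smul_eq_mul, PiLp.inner_apply, RCLike.inner_apply, starRingEnd_apply, star_trivial]
      refine Finset.sum_congr rfl fun x _ => ?_
      rw [mul_comm]
      congr 1
      rw [Finset.sum_eq_single x]
      · simp [EuclideanSpace.single_apply]
      · intro b _ hb
        rw [EuclideanSpace.single_apply, if_neg hb, mul_zero]
      · intro hx; exact absurd (Finset.mem_univ x) hx
    have hf'diff : DifferentiableAt ℝ f' h := by
      rw [hf'eq]
      exact DifferentiableAt.fun_sum fun i _ => (hdiff_wi i).smul_const _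
    have hB : HasFDerivAt f' (fderiv ℝ f' h) h := hf'diff.hasFDerivAt
    have hsymm := second_derivative_symmetric hf'At hB
    have hwfun : ∀ i : Fin k, w i = fun h' => (f' h') (EuclideanSpace.single i (1:ℝ)) := by
      intro i
      funext h'
      rw [hf']
      simp [InnerProductSpace.toDual_apply_apply, EuclideanSpace.inner_single_right]
    have hfd_wi : ∀ i : Fin k, HasFDerivAt (w i)
        ((fderiv ℝ f' h).flip (EuclideanSpace.single i (1:ℝ))) h := by
      intro i
      rw [hwfun i]
      have := hB.clm_apply (hasFDerivAt_const (EuclideanSpace.single i (1:ℝ)) h)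
      simpa using this
    rw [(hfd_wi i).fderiv, (hfd_wi j).fderiv]
    exact hsymm (EuclideanSpace.single j (1:ℝ)) (EuclideanSpace.single i (1:ℝ))
  · exact ⟨A, fun h _ => hgradAll h⟩
end
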